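/- Let k be a field, fix a monomial order ⪯ on the exponent vectors ℕⁿ, and let I be an ideal of the polynomial ring k[x₁,…,xₙ]. Then the residue classes in the quotient ring k[x₁,…,xₙ]/I of the monomials x^a, where a ranges over all exponent vectors in ℕⁿ that are NOT the leading exponent (with respect to ⪯) of any nonzero element of I, form a basis of k[x₁,…,xₙ]/I as a k-vector space. -/

import Mathlib

open MvPolynomial

section Aux

variable {n : ℕ}

/-- Any finite nonempty set of exponents has a maximum for a total, transitive relation. -/
lemma aux_exists_max (le : (Fin n →₀ ℕ) → (Fin n →₀ ℕ) → Prop)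
    (hlin : IsLinearOrder (Fin n →₀ ℕ) le)
    (s : Finset (Fin n →₀ ℕ)) (hs : s.Nonempty) : ∃ a ∈ s, ∀ c ∈ s, le c a := by
  haveI := hlin
  classical
  induction s using Finset.induction with
  | empty => exact absurd hs (by simp)
  | @insert x s hx ih =>
    rcases s.eq_empty_or_nonempty with rfl | hsne
    · refine ⟨x, Finset.mem_insert_self _ _, ?_⟩
      intro c hc
      rcases Finset.mem_insert.1 hc with rfl | hc
      · exact Std.Refl.refl _
      · exact absurd hc (by simp)
    · obtain ⟨a, ha, hmax⟩ := ih hsne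
      rcases Std.Total.total (r := le) x a with h | h
      · exact ⟨a, Finset.mem_insert_of_mem ha, fun c hc => by
          rcases Finset.mem_insert.1 hc with rfl | hc
          · exact h
          · exact hmax c hc⟩
      · exact ⟨x, Finset.mem_insert_self _ _, fun c hc => by
          rcases Finset.mem_insert.1 hc with rfl | hc
          · exact Std.Refl.refl c
          · exact IsTrans.trans _ _ _ (hmax c hc) h⟩

/-- A monomial order is well-founded (Dickson's lemma). -/
lemma aux_wf (le : (Fin n →₀ ℕ) → (Fin n →₀ ℕ) → Prop)
    (hlin : IsLinearOrder (Fin n →₀ ℕ) le)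
    (hadd : ∀ a b c : Fin n →₀ ℕ, le a b → le (a + c) (b + c))
    (hzero : ∀ a : Fin n →₀ ℕ, le 0 a) :
    WellFounded (fun a b => le a b ∧ a ≠ b) := by
  haveI := hlin
  have hmono : ∀ a b : Fin n →₀ ℕ, a ≤ b → le a b := by
    intro a b hab
    have h1 : le (0 + a) ((b - a) + a) := hadd 0 (b - a) a (hzero _)
    rwa [zero_add, add_comm, add_tsub_cancel_of_le hab] at h1
  haveI : IsStrictOrder (Fin n →₀ ℕ) (fun a b => le a b ∧ a ≠ b) :=
    { irrefl := fun a h => h.2 rfl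
      trans := fun a b c hab hbc => by
        refine ⟨IsTrans.trans _ _ _ hab.1 hbc.1, ?_⟩
        rintro rfl
        exact hbc.2 (Std.Antisymm.antisymm _ _ hbc.1 hab.1) }
  rw [RelEmbedding.wellFounded_iff_isEmpty]
  constructor
  intro e
  obtain ⟨i, j, hij, hle⟩ := (Set.isPWO_of_wellQuasiOrderedLE (Set.univ : Set (Fin n →₀ ℕ))).exists_lt
    (f := fun m => e m) (fun m => Set.mem_univ _)
  have h1 : le (e i) (e j) := hmono _ _ hle
  have h2 : le (e j) (e i) ∧ e j ≠ e i := e.map_rel_iff.2 hij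
  exact h2.2 (Std.Antisymm.antisymm _ _ h2.1 h1)

end Aux

set_option maxHeartbeats 1000000 in
set_option synthInstance.maxHeartbeats 200000 in
/-- **Monomial basis of the quotient ring.**
Let `k` be a field, fix a monomial order `le` on exponent vectors `Fin n →₀ ℕ`
(a linear order compatible with addition, with `0` as least element), and let `I`
be an ideal of `k[x₁,…,xₙ]`. The residue classes of the monomials `x^a`, where `a`
ranges over exponent vectors that are not the leading exponent of any nonzero
element of `I`, form a `k`-basis of the quotient ring. -/
theorem quotient_basis_of_non_leading_exponents
    {k : Type*} [Field k] {n : ℕ}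
    (le : (Fin n →₀ ℕ) → (Fin n →₀ ℕ) → Prop)
    (hlin : IsLinearOrder (Fin n →₀ ℕ) le)
    (hadd : ∀ a b c : Fin n →₀ ℕ, le a b → le (a + c) (b + c))
    (hzero : ∀ a : Fin n →₀ ℕ, le 0 a)
    (I : Ideal (MvPolynomial (Fin n) k)) :
    ∃ b : Module.Basis {a : Fin n →₀ ℕ //
        ¬ ∃ f ∈ I, f ≠ 0 ∧ a ∈ f.support ∧ ∀ c ∈ f.support, le c a}
        k (MvPolynomial (Fin n) k ⧸ I),
      ∀ a, b a = Ideal.Quotient.mk I (monomial a.1 (1 : k)) := by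
  classical
  haveI := hlin
  set P : (Fin n →₀ ℕ) → Prop :=
    fun a => ¬ ∃ f ∈ I, f ≠ 0 ∧ a ∈ f.support ∧ ∀ c ∈ f.support, le c a with hP
  set v : {a : Fin n →₀ ℕ // P a} → MvPolynomial (Fin n) k ⧸ I :=
    fun a => Ideal.Quotient.mk I (monomial a.1 (1 : k)) with hv
  have hwf := aux_wf le hlin hadd hzero
  have hmax := aux_exists_max le hlin
  -- the `k`-algebra quotient map, to have linearity lemmas
  set φ : MvPolynomial (Fin n) k →ₐ[k] MvPolynomial (Fin n) k ⧸ I :=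
    Ideal.Quotient.mkₐ k I with hφ
  have hφeq : ∀ f, φ f = Ideal.Quotient.mk I f :=
    fun f => congrFun (Ideal.Quotient.mkₐ_eq_mk k I) f
  -- spanning
  have key : ∀ d : Fin n →₀ ℕ, ∀ f : MvPolynomial (Fin n) k,
      (∀ c ∈ f.support, le c d) →
      Ideal.Quotient.mk I f ∈ Submodule.span k (Set.range v) := by
    intro d
    induction d using WellFounded.induction hwf with
    | _ d ih =>
    intro f hfd
    rcases eq_or_ne f 0 with rfl | hf0
    · simp [Submodule.zero_mem]
    obtain ⟨a, ha, hamax⟩ := hmax f.support (support_nonempty.2 hf0)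
    have had : le a d := hfd a ha
    -- auxiliary: any `g` with support bounded strictly below `a` within the `d`-bound
    have step : ∀ g : MvPolynomial (Fin n) k,
        (∀ c ∈ g.support, le c a ∧ c ≠ a) →
        Ideal.Quotient.mk I g ∈ Submodule.span k (Set.range v) := by
      intro g hg
      rcases eq_or_ne g 0 with rfl | hg0
      · simp [Submodule.zero_mem]
      obtain ⟨b, hb, hbmax⟩ := hmax g.support (support_nonempty.2 hg0)
      have hba : le b a ∧ b ≠ a := hg b hb
      have hbd : le b d ∧ b ≠ d := by
        constructor
        · exact IsTrans.trans _ _ _ hba.1 had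
        · rintro rfl
          exact hba.2 (Std.Antisymm.antisymm _ _ hba.1 had)
      exact ih b hbd g hbmax
    by_cases hPa : P a
    · -- subtract the monomial
      set g : MvPolynomial (Fin n) k := f - monomial a (coeff a f) with hgdef
      have hgsupp : ∀ c ∈ g.support, le c a ∧ c ≠ a := by
        intro c hc
        have hca : c ≠ a := by
          rintro rfl
          simp [hgdef, mem_support_iff, coeff_sub, coeff_monomial] at hc
        have hcf : c ∈ f.support := by
          rw [mem_support_iff] at hc ⊢
          intro h0
          apply hc
          simp [hgdef, coeff_sub, coeff_monomial, if_neg (Ne.symm hca), h0]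
        exact ⟨hamax c hcf, hca⟩
      have hgspan := step g hgsupp
      have h1 : (coeff a f) • (Ideal.Quotient.mk I (monomial a (1 : k)))
          = Ideal.Quotient.mk I (monomial a (coeff a f)) := by
        rw [← hφeq, ← hφeq, ← map_smul, smul_monomial, smul_eq_mul, mul_one]
      have : Ideal.Quotient.mk I f
          = Ideal.Quotient.mk I g + (coeff a f) • v ⟨a, hPa⟩ := by
        show Ideal.Quotient.mk I f = Ideal.Quotient.mk I g
          + (coeff a f) • Ideal.Quotient.mk I (monomial a (1 : k))
        rw [h1, ← hφeq, ← hφeq, ← hφeq, ← map_add, hgdef]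
        congr 1
        ring
      rw [this]
      exact Submodule.add_mem _ hgspan
        (Submodule.smul_mem _ _ (Submodule.subset_span ⟨⟨a, hPa⟩, rfl⟩))
    · -- reduce by an element of the ideal
      obtain ⟨p, hpI, hp0, hap, hpmax⟩ := not_not.mp hPa
      set q : k := coeff a f / coeff a p with hq
      set g : MvPolynomial (Fin n) k := f - q • p with hgdef
      have hcap : coeff a p ≠ 0 := mem_support_iff.1 hap
      have hmkg : Ideal.Quotient.mk I g = Ideal.Quotient.mk I f := by
        rw [hgdef, map_sub, sub_eq_self, ← hφeq, map_smul, hφeq,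
          Ideal.Quotient.eq_zero_iff_mem.2 hpI, smul_zero]
      have hgsupp : ∀ c ∈ g.support, le c a ∧ c ≠ a := by
        intro c hc
        have hca : c ≠ a := by
          rintro rfl
          rw [mem_support_iff] at hc
          apply hc
          simp [hgdef, coeff_sub, coeff_smul, hq, div_mul_cancel₀ _ hcap]
        refine ⟨?_, hca⟩
        rw [mem_support_iff, hgdef, coeff_sub, coeff_smul] at hc
        by_cases hcf : c ∈ f.support
        · exact hamax c hcf
        · have : coeff c f = 0 := notMem_support_iff.1 hcf
          have hcp : coeff c p ≠ 0 := by
            intro h0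
            apply hc
            simp [this, h0]
          exact hpmax c (mem_support_iff.2 hcp)
      have := step g hgsupp
      rwa [hmkg] at this
  have hspan : ⊤ ≤ Submodule.span k (Set.range v) := by
    intro x _
    obtain ⟨f, rfl⟩ := Ideal.Quotient.mk_surjective x
    rcases eq_or_ne f 0 with rfl | hf0
    · simp [Submodule.zero_mem]
    obtain ⟨a, ha, hamax⟩ := hmax f.support (support_nonempty.2 hf0)
    exact key a f hamax
  have hli : LinearIndependent k v := by
    rw [linearIndependent_iff']
    intro s g hsum i hi
    by_contra hgi
    set f : MvPolynomial (Fin n) k := ∑ j ∈ s, monomial j.1 (g j) with hfdef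
    have hcoeff : ∀ j ∈ s, coeff j.1 f = g j := by
      intro j hj
      rw [hfdef, coeff_sum]
      rw [Finset.sum_eq_single_of_mem j hj]
      · simp [coeff_monomial]
      · intro b hb hbj
        rw [coeff_monomial, if_neg]
        exact fun h => hbj (Subtype.ext h)
    have hf0 : f ≠ 0 := by
      intro h0
      apply hgi
      rw [← hcoeff i hi, h0, coeff_zero]
    have hfI : f ∈ I := by
      rw [← Ideal.Quotient.eq_zero_iff_mem, ← hφeq, hfdef, map_sum, ← hsum]
      apply Finset.sum_congr rfl
      intro j _
      rw [← mul_one (g j), ← smul_eq_mul, ← smul_monomial, map_smul, hφeq]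
      simp [hv]
    have hsupp : f.support ⊆ s.image (fun j => j.1) := by
      refine subset_trans support_sum ?_
      intro b hb
      simp only [Finset.mem_biUnion] at hb
      obtain ⟨j, hj, hbj⟩ := hb
      have := support_monomial_subset hbj
      simp only [Finset.mem_singleton] at this
      subst this
      exact Finset.mem_image_of_mem _ hj
    obtain ⟨a, ha, hamax⟩ := hmax f.support (support_nonempty.2 hf0)
    obtain ⟨j, hj, hja⟩ := Finset.mem_image.1 (hsupp ha)
    exact (hja ▸ j.2) ⟨f, hfI, hf0, hja ▸ ha, fun c hc => hja ▸ hamax c hc⟩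
  exact ⟨Module.Basis.mk hli hspan, fun a => by rw [Module.Basis.mk_apply]⟩
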